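/- If Θ ⊆ ℝ^p is closed, each ℓᵢ : Θ → ℝ (i = 0,…,m) is continuous, and the level set {θ ∈ Θ : ℓ₀(θ) ≤ p̄, ℓᵢ(θ) ≤ u ∀i} is compact and nonempty for some u > 0 and p̄ > inf over feasible θ of ℓ₀, then the perturbation function p(v) = inf{ℓ₀(θ) : ℓᵢ(θ) ≤ vᵢ ∀i} is lower semicontinuous at v = 0, i.e., liminf_{v → 0} p(v) ≥ p(0). -/

import Mathlib

open scoped BigOperators

open Filter Topology

/-- Stability of degree 0: under closedness, continuity and a compact feasible level
set, the perturbation function is lower semicontinuous at `0`. -/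
theorem perturbation_lsc_at_zero {p m : ℕ}
    (Θ : Set (Fin p → ℝ)) (hΘ : IsClosed Θ)
    (ℓ₀ : (Fin p → ℝ) → ℝ) (ℓ : Fin m → (Fin p → ℝ) → ℝ)
    (hℓ₀ : ContinuousOn ℓ₀ Θ) (hℓ : ∀ i, ContinuousOn (ℓ i) Θ)
    (hfeas : ∃ θ ∈ Θ, ∀ i, ℓ i θ ≤ 0)
    (u : ℝ) (hu : 0 < u) (pbar : ℝ)
    (hpbar : (⨅ θ : {θ : Fin p → ℝ // θ ∈ Θ ∧ ∀ i, ℓ i θ ≤ 0}, ((ℓ₀ θ : ℝ) : EReal))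
        < ((pbar : ℝ) : EReal))
    (hcompact : IsCompact {θ ∈ Θ | ℓ₀ θ ≤ pbar ∧ ∀ i, ℓ i θ ≤ u})
    (hlevelne : {θ ∈ Θ | ℓ₀ θ ≤ pbar ∧ ∀ i, ℓ i θ ≤ u}.Nonempty) :
    LowerSemicontinuousAt
      (fun v : Fin m → ℝ =>
        ⨅ θ : {θ : Fin p → ℝ // θ ∈ Θ ∧ ∀ i, ℓ i θ ≤ v i}, ((ℓ₀ θ : ℝ) : EReal))
      0 := by
  set f : (Fin m → ℝ) → EReal := fun v =>
    ⨅ θ : {θ : Fin p → ℝ // θ ∈ Θ ∧ ∀ i, ℓ i θ ≤ v i}, ((ℓ₀ θ : ℝ) : EReal) with hf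
  intro y hy
  by_contra hcon
  rw [Filter.not_eventually] at hcon
  have hy0 : y < f 0 := hy
  have hfp : f 0 < (pbar : EReal) := hpbar
  obtain ⟨c, hyc, hc⟩ := EReal.exists_between_coe_real (lt_min hy0 (hy0.trans hfp))
  have hcp0 : (c : EReal) < f 0 := hc.trans_le (min_le_left _ _)
  have hcpbar : c < pbar := by
    have := hc.trans_le (min_le_right _ _)
    exact_mod_cast this
  have hev : ∀ᶠ v : Fin m → ℝ in 𝓝 0, ∀ i, v i ≤ u := by
    rw [eventually_all]
    intro i
    have hcont : Tendsto (fun v : Fin m → ℝ => v i) (𝓝 0) (𝓝 0) := by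
      simpa using (continuous_apply i).tendsto (0 : Fin m → ℝ)
    filter_upwards [hcont (Iio_mem_nhds hu)] with v hv using le_of_lt hv
  obtain ⟨v, hvtend, hvp⟩ := Filter.exists_seq_forall_of_frequently
    (hcon.and_eventually hev)
  have hθ : ∀ n, ∃ θ : {θ : Fin p → ℝ // θ ∈ Θ ∧ ∀ i, ℓ i θ ≤ v n i},
      ((ℓ₀ (θ : Fin p → ℝ) : ℝ) : EReal) < (c : EReal) := by
    intro n
    have hle : f (v n) ≤ y := not_lt.mp (hvp n).1
    exact iInf_lt_iff.mp (lt_of_le_of_lt hle hyc)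
  choose θ hθlt using hθ
  set x : ℕ → Fin p → ℝ := fun n => (θ n : Fin p → ℝ) with hx
  have hxlt : ∀ n, ℓ₀ (x n) < c := by
    intro n
    have := hθlt n
    exact_mod_cast this
  have hxK : ∀ n, x n ∈ {θ ∈ Θ | ℓ₀ θ ≤ pbar ∧ ∀ i, ℓ i θ ≤ u} := by
    intro n
    refine ⟨(θ n).2.1, le_of_lt ((hxlt n).trans hcpbar), fun i => ?_⟩
    exact le_trans ((θ n).2.2 i) ((hvp n).2 i)
  obtain ⟨a, haK, φ, hφ, hxa⟩ := hcompact.tendsto_subseq hxK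
  have haΘ : a ∈ Θ := haK.1
  have hxa' : Tendsto (fun n => x (φ n)) atTop (𝓝[Θ] a) :=
    tendsto_nhdsWithin_of_tendsto_nhds_of_eventually_within _ hxa
      (Filter.Eventually.of_forall fun n => (θ (φ n)).2.1)
  have hl0 : Tendsto (fun n => ℓ₀ (x (φ n))) atTop (𝓝 (ℓ₀ a)) :=
    (hℓ₀ a haΘ).tendsto.comp hxa'
  have hla : ℓ₀ a ≤ c :=
    le_of_tendsto hl0 (Filter.Eventually.of_forall fun n => (hxlt (φ n)).le)
  have hvi : ∀ i, Tendsto (fun n => v (φ n) i) atTop (𝓝 0) := by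
    intro i
    have : Tendsto (fun n => v (φ n)) atTop (𝓝 0) := hvtend.comp hφ.tendsto_atTop
    simpa [Function.comp_def] using ((continuous_apply i).tendsto (0 : Fin m → ℝ)).comp this
  have hlia : ∀ i, ℓ i a ≤ 0 := by
    intro i
    have hli : Tendsto (fun n => ℓ i (x (φ n))) atTop (𝓝 (ℓ i a)) :=
      (hℓ i a haΘ).tendsto.comp hxa'
    exact le_of_tendsto_of_tendsto' hli (hvi i) fun n => (θ (φ n)).2.2 i
  have hfeas0 : f 0 ≤ ((ℓ₀ a : ℝ) : EReal) := by
    have : f 0 ≤ ((ℓ₀ ((⟨a, haΘ, hlia⟩ :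
        {θ : Fin p → ℝ // θ ∈ Θ ∧ ∀ i, ℓ i θ ≤ (0 : Fin m → ℝ) i}) : Fin p → ℝ) : ℝ) : EReal) :=
      iInf_le _ _
    simpa using this
  have : f 0 ≤ (c : EReal) := hfeas0.trans (by exact_mod_cast hla)
  exact absurd hcp0 (not_lt.mpr this)
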